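/- Let n ≥ 1, let E = EuclideanSpace ℝ (Fin n), and let α and β be star partial homeomorphisms of E. Then α and β generate the same principal ideal under left multiplication — that is, there exist star partial homeomorphisms γ and δ with β ≈ γ.trans α and α ≈ δ.trans β — if and only if α.target = β.target. (This describes the other one-sided Green relation on the semigroup of star partial homeomorphisms: it is determined by equality of ranges.) -/
import Mathlib

noncomputable def radial {n : ℕ} (L : Set (EuclideanSpace ℝ (Fin n)))
    (u : EuclideanSpace ℝ (Fin n)) : ℝ :=
  sSup {c : ℝ | 0 ≤ c ∧ c • u ∈ L}

def IsStar {n : ℕ} (L : Set (EuclideanSpace ℝ (Fin n))) : Prop :=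
  IsCompact L ∧ (0 : EuclideanSpace ℝ (Fin n)) ∈ interior L ∧
    (∀ x ∈ L, segment ℝ 0 x ⊆ L) ∧
    ContinuousOn (radial L) (Metric.sphere (0 : EuclideanSpace ℝ (Fin n)) 1)

def IsStarPartialHomeo {n : ℕ}
    (α : PartialEquiv (EuclideanSpace ℝ (Fin n)) (EuclideanSpace ℝ (Fin n))) : Prop :=
  IsStar α.source ∧ IsStar α.target ∧
    ContinuousOn α α.source ∧ ContinuousOn α.symm α.target ∧
    α 0 = 0 ∧ ∀ x ∈ α.source, α '' (segment ℝ 0 x) = segment ℝ 0 (α x)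

lemma key_aux {n : ℕ}
    (α β : PartialEquiv (EuclideanSpace ℝ (Fin n)) (EuclideanSpace ℝ (Fin n)))
    (hα : IsStarPartialHomeo α) (hβ : IsStarPartialHomeo β)
    (h : α.target = β.target) :
    IsStarPartialHomeo (β.trans α.symm) ∧ β ≈ (β.trans α.symm).trans α := by
  obtain ⟨hαs, hαt, hαc, hαc', hα0, hαseg⟩ := hα
  obtain ⟨hβs, hβt, hβc, hβc', hβ0, hβseg⟩ := hβ
  have h0α : (0 : EuclideanSpace ℝ (Fin n)) ∈ α.source := interior_subset hαs.2.1
  have hα0' : α.symm 0 = 0 := by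
    conv_lhs => rw [← hα0]
    exact α.left_inv h0α
  set γ := β.trans α.symm with hγ
  have hsrc : γ.source = β.source := by
    rw [hγ, PartialEquiv.trans_source, PartialEquiv.symm_source]
    refine Set.inter_eq_left.2 fun x hx => ?_
    show β x ∈ α.target
    exact h ▸ β.map_source hx
  have htgt : γ.target = α.source := by
    rw [hγ, PartialEquiv.trans_target, PartialEquiv.symm_target]
    refine Set.inter_eq_left.2 fun x hx => ?_
    simp only [Set.mem_preimage, PartialEquiv.symm_symm]
    rw [← h]; exact α.map_source hx
  have hγcoe : ⇑γ = ⇑α.symm ∘ ⇑β := rfl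
  have hγsymm : ⇑γ.symm = ⇑β.symm ∘ ⇑α := rfl
  have hmapsβ : ∀ x ∈ β.source, β x ∈ α.target := fun x hx => h ▸ β.map_source hx
  constructor
  · refine ⟨hsrc ▸ hβs, htgt ▸ hαs, ?_, ?_, ?_, ?_⟩
    · rw [hγcoe, hsrc]
      exact hαc'.comp hβc (fun x hx => hmapsβ x hx)
    · rw [hγsymm, htgt]
      exact hβc'.comp hαc (fun x hx => h ▸ α.map_source hx)
    · show α.symm (β 0) = 0
      rw [hβ0, hα0']
    · intro x hx
      rw [hsrc] at hx
      have h1 : γ '' segment ℝ 0 x = α.symm '' (β '' segment ℝ 0 x) := by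
        rw [hγcoe, Set.image_comp]
      rw [h1, hβseg x hx]
      have hy : β x ∈ α.target := hmapsβ x hx
      set z := α.symm (β x) with hz
      have hzs : z ∈ α.source := α.map_target hy
      have hseg : segment ℝ 0 z ⊆ α.source := hαs.2.2.1 z hzs
      have h2 : α '' segment ℝ 0 z = segment ℝ 0 (β x) := by
        rw [hαseg z hzs, hz, α.right_inv hy]
      have : α.symm '' segment ℝ 0 (β x) = segment ℝ 0 z := by
        rw [← h2, α.symm_image_image_of_subset_source hseg]
      rw [this]
      rfl
  · constructor
    · rw [PartialEquiv.trans_source, hsrc]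
      refine (Set.inter_eq_left.2 fun x hx => ?_).symm
      have : γ x ∈ γ.target := γ.map_source (hsrc ▸ hx)
      rwa [htgt] at this
    · intro x hx
      show β x = α (α.symm (β x))
      rw [α.right_inv (hmapsβ x hx)]

theorem stmt_10 (n : ℕ) (hn : 1 ≤ n)
    (α β : PartialEquiv (EuclideanSpace ℝ (Fin n)) (EuclideanSpace ℝ (Fin n)))
    (hα : IsStarPartialHomeo α) (hβ : IsStarPartialHomeo β) :
    (∃ γ δ : PartialEquiv (EuclideanSpace ℝ (Fin n)) (EuclideanSpace ℝ (Fin n)),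
        IsStarPartialHomeo γ ∧ IsStarPartialHomeo δ ∧
        β ≈ γ.trans α ∧ α ≈ δ.trans β) ↔ α.target = β.target := by
  constructor
  · rintro ⟨γ, δ, hγ, hδ, h1, h2⟩
    have ht1 : β.target = (γ.trans α).target := PartialEquiv.EqOnSource.target_eq h1
    have ht2 : α.target = (δ.trans β).target := PartialEquiv.EqOnSource.target_eq h2
    rw [PartialEquiv.trans_target] at ht1 ht2
    apply Set.Subset.antisymm
    · rw [ht2]; exact Set.inter_subset_left
    · rw [ht1]; exact Set.inter_subset_left
  · intro h
    obtain ⟨hγ, hγe⟩ := key_aux α β hα hβ h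
    obtain ⟨hδ, hδe⟩ := key_aux β α hβ hα h.symm
    exact ⟨β.trans α.symm, α.trans β.symm, hγ, hδ, hγe, hδe⟩
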